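/- Fix n ≥ 2. Let a, b, c, d ∈ ℂ with ad − bc = 1 and c ≠ 0, and let σ_k (for 0 ≤ k ≤ n+1, with σ₀ = 1) denote the k-th elementary symmetric function of the multiset of n+1 fixed-point multipliers of f(z) = (a z^n + b)/(c z^n + d), i.e. of the multiset obtained by mapping each root z (with multiplicity) of Φ(z) = c z^{n+1} − a z^n + d z − b to f′(z) = n z^{n−1}/(c z^n + d)². Then Σ_{k=0}^{n+1} (−1)^k (n − k) σ_k = 0. (Remark 2.9: the linear relation among the elementary symmetric functions of the fixed-point multipliers of a bicritical map arising from the holomorphic fixed point formula; it does not involve the invariant Y.) -/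

import Mathlib

open Polynomial Finset

lemma derivative_finset_prod {ι : Type*} [DecidableEq ι] (s : Finset ι) (f : ι → Polynomial ℂ) :
    derivative (∏ i ∈ s, f i) = ∑ i ∈ s, (∏ j ∈ s.erase i, f j) * derivative (f i) := by
  rw [Finset.prod_eq_multiset_prod, derivative_prod, Finset.sum_eq_multiset_sum]
  refine congr_arg Multiset.sum (Multiset.map_congr rfl fun i hi => ?_)
  rw [← Finset.erase_val, ← Finset.prod_eq_multiset_prod]

lemma lag_aux {N : ℕ} (z : Fin (N + 1) → ℂ) (hinj : Function.Injective z)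
    (q : ℂ[X]) (hq : q.degree < (N + 1 : ℕ)) :
    ∑ i, q.eval (z i) * (∏ j ∈ Finset.univ.erase i, (z i - z j))⁻¹ = q.coeff N := by
  have hvs : Set.InjOn z ↑(univ : Finset (Fin (N + 1))) := hinj.injOn
  have hq' : q.degree < (#(univ : Finset (Fin (N + 1))) : ℕ) := by simpa using hq
  have hb : ∀ i : Fin (N + 1),
      (Lagrange.basis univ z i).coeff N = (∏ j ∈ univ.erase i, (z i - z j))⁻¹ := by
    intro i
    have hcard : (univ.erase i).card = N := by
      rw [card_erase_of_mem (mem_univ i)]; simp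
    have hmonic : (∏ j ∈ univ.erase i, (X - C (z j))).Monic :=
      monic_prod_of_monic _ _ fun j _ => monic_X_sub_C _
    have hdeg : (∏ j ∈ univ.erase i, (X - C (z j))).natDegree = N := by
      rw [natDegree_prod _ _ fun j _ => X_sub_C_ne_zero (z j)]
      simp [hcard]
    have hcoeff1 : (∏ j ∈ univ.erase i, (X - C (z j))).coeff N = 1 := by
      have := hmonic.coeff_natDegree
      rwa [hdeg] at this
    have : Lagrange.basis univ z i
        = C (∏ j ∈ univ.erase i, (z i - z j)⁻¹) * ∏ j ∈ univ.erase i, (X - C (z j)) := by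
      rw [Lagrange.basis]
      simp_rw [Lagrange.basisDivisor]
      rw [Finset.prod_mul_distrib, map_prod]
    rw [this, coeff_C_mul, hcoeff1, mul_one, ← Finset.prod_inv_distrib]
  have hI := Lagrange.eq_interpolate hvs hq'
  have h2 := congrArg (fun p : ℂ[X] => p.coeff N) hI
  simp only [Lagrange.interpolate_apply, finset_sum_coeff, coeff_C_mul] at h2
  rw [h2]
  exact Finset.sum_congr rfl fun i _ => by rw [hb]


lemma esymm_aux (M : Multiset ℂ) {m : ℕ} (hM : Multiset.card M = m + 1) :
    ∑ k ∈ Finset.range (m + 2), (-1 : ℂ) ^ k * ((m : ℂ) - (k : ℂ)) * M.esymm k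
      = (Polynomial.derivative (M.map fun r => X - C r).prod).eval 1
        - (M.map fun r => X - C r).prod.eval 1 := by
  set P : ℂ[X] := (M.map fun r => X - C r).prod with hP
  have hPdeg : P.natDegree = m + 1 := by
    rw [hP, natDegree_multiset_prod_X_sub_C_eq_card, hM]
  have hcoeff : ∀ k ≤ m + 1, P.coeff k = (-1 : ℂ) ^ (m + 1 - k) * M.esymm (m + 1 - k) := by
    intro k hk
    have := Multiset.prod_X_sub_C_coeff M (k := k) (by rw [hM]; exact hk)
    rwa [hM] at this
  have h1 : P.eval 1 = ∑ j ∈ range (m + 2), P.coeff j := by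
    rw [eval_eq_sum_range' (by omega : P.natDegree < m + 2)]
    simp
  have h2 : (derivative P).eval 1 = ∑ j ∈ range (m + 2), (j : ℂ) * P.coeff j := by
    have hd : (derivative P).natDegree < m + 2 := by
      have := natDegree_derivative_le P
      omega
    rw [eval_eq_sum_range' hd]
    simp only [one_pow, mul_one, coeff_derivative]
    rw [Finset.sum_range_succ' (fun j => (j : ℂ) * P.coeff j) (m + 1)]
    have hz : P.coeff (m + 2) = 0 := coeff_eq_zero_of_natDegree_lt (by omega)
    rw [Finset.sum_range_succ (fun i => P.coeff (i + 1) * ((i : ℂ) + 1)) (m + 1)]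
    simp [hz]
    exact Finset.sum_congr rfl fun i _ => by push_cast; ring
  rw [h1, h2, ← Finset.sum_sub_distrib]
  have := Finset.sum_range_reflect
    (fun k => (-1 : ℂ) ^ k * ((m : ℂ) - (k : ℂ)) * M.esymm k) (m + 2)
  rw [← this]
  refine Finset.sum_congr rfl fun k hk => ?_
  rw [Finset.mem_range] at hk
  have hk' : k ≤ m + 1 := by omega
  have e1 : m + 2 - 1 - k = m + 1 - k := by omega
  rw [e1, hcoeff k hk']
  have e2 : ((m + 1 - k : ℕ) : ℂ) = (m : ℂ) + 1 - (k : ℂ) := by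
    push_cast [Nat.cast_sub (by omega : k ≤ m + 1)]; ring
  rw [e2]
  have e3 : (-1 : ℂ) ^ (m + 1 - k) * ((m : ℂ) - ((m : ℂ) + 1 - (k : ℂ))) * M.esymm (m + 1 - k)
      = ((k : ℂ) - 1) * ((-1 : ℂ) ^ (m + 1 - k) * M.esymm (m + 1 - k)) := by ring
  rw [e3]
  ring

/-- Remark 2.9: the linear relation `Σ_{k=0}^{n+1} (-1)^k (n-k) σ_k = 0` among
the elementary symmetric functions `σ_k` of the `n+1` fixed-point multipliers
of a bicritical map `f(z) = (a z^n + b)/(c z^n + d)` (`ad - bc = 1`, `c ≠ 0`),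
arising from the holomorphic fixed point formula. -/
theorem stmt15 (n : ℕ) (hn : 2 ≤ n) (a b c d : ℂ)
    (h : a * d - b * c = 1) (hc : c ≠ 0) :
    let M : Multiset ℂ :=
      ((Polynomial.C c * Polynomial.X ^ (n + 1) - Polynomial.C a * Polynomial.X ^ n +
        Polynomial.C d * Polynomial.X - Polynomial.C b : Polynomial ℂ).roots).map
        fun z => (n : ℂ) * z ^ (n - 1) / (c * z ^ n + d) ^ 2
    ∑ k ∈ Finset.range (n + 2), (-1 : ℂ) ^ k * ((n : ℂ) - (k : ℂ)) * M.esymm k = 0 := by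
  intro M
  obtain ⟨m, rfl⟩ : ∃ m, n = m + 2 := ⟨n - 2, by omega⟩
  set Φ : ℂ[X] := C c * X ^ (m + 3) - C a * X ^ (m + 2) + C d * X - C b with hΦ
  have hΦdeg : Φ.natDegree = m + 3 := by
    rw [hΦ]; compute_degree!
    simp [hc]
  have hΦ0 : Φ ≠ 0 := fun h0 => by simp [h0] at hΦdeg
  have hev : ∀ x : ℂ, Φ.eval x = c * x ^ (m + 3) - a * x ^ (m + 2) + d * x - b := by
    intro x; simp [hΦ]
  have hlead : Φ.leadingCoeff = c := by
    rw [leadingCoeff, hΦdeg, hΦ]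
    simp [coeff_X_pow, coeff_C]
  have hsplits : Splits Φ := IsAlgClosed.splits Φ
  have hcard : Multiset.card Φ.roots = m + 3 := by
    rw [splits_iff_card_roots.mp hsplits, hΦdeg]
  -- list/Fin representation of the roots
  have hlen : Φ.roots.toList.length = m + 3 := by
    rw [Multiset.length_toList, hcard]
  set z : Fin (m + 3) → ℂ := fun i => Φ.roots.toList.get (Fin.cast hlen.symm i) with hz
  have hofn : List.ofFn z = Φ.roots.toList := by
    apply List.ext_getElem (by simp [hlen])
    intro i h1 h2
    rw [List.getElem_ofFn]
    simp [hz]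
  have hR : Φ.roots = ↑(List.ofFn z) := by rw [hofn, Multiset.coe_toList]
  have hmem : ∀ i, z i ∈ Φ.roots := by
    intro i; rw [hR]
    exact Multiset.mem_coe.mpr (List.mem_ofFn.mpr ⟨i, rfl⟩)
  have hroot : ∀ i, c * (z i) ^ (m + 3) - a * (z i) ^ (m + 2) + d * (z i) - b = 0 := by
    intro i
    have := isRoot_of_mem_roots (hmem i)
    rwa [IsRoot.def, hev] at this
  set Q : Fin (m + 3) → ℂ := fun i => c * (z i) ^ (m + 2) + d with hQdef
  have hQ : ∀ i, Q i ≠ 0 := by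
    intro i hQ0
    have h1 : (1 : ℂ) = 0 := by
      linear_combination (a - c * z i) * hQ0 + c * hroot i - h
    exact one_ne_zero h1
  -- factorization and derivative evaluation
  have hfact : Φ = C c * ∏ i, (X - C (z i)) := by
    have h0 := hsplits.eq_prod_roots
    rw [hlead, hR] at h0
    rw [h0, Multiset.map_coe, List.map_ofFn, Multiset.prod_coe, List.prod_ofFn]
    rfl
  set Ψ : Fin (m + 3) → ℂ := fun i => (derivative Φ).eval (z i) with hΨdef
  have hΨ : ∀ i, Ψ i = c * ∏ k ∈ univ.erase i, (z i - z k) := by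
    intro i
    rw [hΨdef]
    simp only [hfact, derivative_mul, derivative_C, zero_mul, zero_add]
    rw [derivative_finset_prod]
    simp only [derivative_sub, derivative_X, derivative_C, sub_zero, mul_one]
    rw [eval_mul, eval_C, eval_finset_sum]
    congr 1
    rw [Finset.sum_eq_single i ?_ (by simp)]
    · rw [eval_prod]
      exact Finset.prod_congr rfl fun j _ => by simp
    · intro j _ hji
      rw [eval_prod]
      refine Finset.prod_eq_zero (Finset.mem_erase.mpr ⟨hji.symm, mem_univ i⟩) ?_
      simp
  have hΨe : ∀ x : ℂ, (derivative Φ).eval x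
      = ((m : ℂ) + 3) * c * x ^ (m + 2) - ((m : ℂ) + 2) * a * x ^ (m + 1) + d := by
    intro x
    simp [hΦ]
    push_cast
    ring
  set lam : Fin (m + 3) → ℂ := fun i => ((m + 2 : ℕ) : ℂ) * (z i) ^ (m + 1) / (Q i) ^ 2
    with hlam
  have hkeypt : ∀ i, 1 - lam i = Ψ i / Q i := by
    intro i
    have key : (Q i) ^ 2 - ((m + 2 : ℕ) : ℂ) * (z i) ^ (m + 1) = Ψ i * Q i := by
      rw [hΨdef]
      show (c * (z i) ^ (m + 2) + d) ^ 2 - ((m + 2 : ℕ) : ℂ) * (z i) ^ (m + 1)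
        = (derivative Φ).eval (z i) * (c * (z i) ^ (m + 2) + d)
      rw [hΨe]
      push_cast
      linear_combination (-(((m : ℂ) + 2) * (z i) ^ (m + 1) * c)) * hroot i
        + (((m : ℂ) + 2) * (z i) ^ (m + 1)) * h
    have e1 : 1 - lam i = ((Q i) ^ 2 - ((m + 2 : ℕ) : ℂ) * (z i) ^ (m + 1)) / (Q i) ^ 2 := by
      rw [hlam, one_sub_div (pow_ne_zero 2 (hQ i))]
    rw [e1, key, pow_two, mul_div_mul_right _ _ (hQ i)]
  have key2 : ∑ i, Q i * ∏ j ∈ univ.erase i, Ψ j = ∏ i, Ψ i := by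
    by_cases hinj : Function.Injective z
    · set w : Fin (m + 3) → ℂ := fun i => ∏ k ∈ univ.erase i, (z i - z k) with hw
      have hwne : ∀ i, w i ≠ 0 := by
        intro i
        refine Finset.prod_ne_zero_iff.mpr fun k hk => ?_
        exact sub_ne_zero_of_ne fun e => (Finset.mem_erase.mp hk).1 (hinj e.symm)
      have hqdeg : (C c * X ^ (m + 2) + C d : ℂ[X]).degree < ((m + 2) + 1 : ℕ) := by
        apply lt_of_le_of_lt (degree_add_le _ _)
        simp only [max_lt_iff]
        constructor
        · apply lt_of_le_of_lt (degree_mul_le _ _)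
          apply lt_of_le_of_lt (add_le_add degree_C_le (degree_X_pow _).le)
          · simp
            exact_mod_cast Nat.lt_succ_self (m + 2)
        · apply lt_of_le_of_lt degree_C_le
          exact_mod_cast Nat.succ_pos (m + 2)
      have hlag := lag_aux z hinj (C c * X ^ (m + 2) + C d) hqdeg
      have hcoeffq : (C c * X ^ (m + 2) + C d : ℂ[X]).coeff (m + 2) = c := by
        simp [coeff_X_pow, coeff_C]
      have hlag' : ∑ i, Q i * (w i)⁻¹ = c := by
        rw [← hcoeffq, ← hlag]
        refine Finset.sum_congr rfl fun i _ => ?_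
        simp [hQdef, hw]
      have hprodΨ : ∏ i, Ψ i = c ^ (m + 3) * ∏ i, w i := by
        calc ∏ i, Ψ i = ∏ i, (c * w i) := Finset.prod_congr rfl fun i _ => hΨ i
          _ = (∏ _i : Fin (m + 3), c) * ∏ i, w i := Finset.prod_mul_distrib
          _ = c ^ (m + 3) * ∏ i, w i := by rw [Finset.prod_const]; simp
      have hterm : ∀ i : Fin (m + 3),
          Q i * ∏ j ∈ univ.erase i, Ψ j
            = (c ^ (m + 2) * ∏ k, w k) * (Q i * (w i)⁻¹) := by
        intro i
        have h1 : ∏ j ∈ univ.erase i, Ψ j = c ^ (m + 2) * ∏ j ∈ univ.erase i, w j := by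
          calc ∏ j ∈ univ.erase i, Ψ j = ∏ j ∈ univ.erase i, (c * w j) :=
                Finset.prod_congr rfl fun j _ => hΨ j
            _ = (∏ _j ∈ univ.erase i, c) * ∏ j ∈ univ.erase i, w j :=
                Finset.prod_mul_distrib
            _ = c ^ (m + 2) * ∏ j ∈ univ.erase i, w j := by
                rw [Finset.prod_const, card_erase_of_mem (mem_univ i)]; simp
        have h2 : ∏ j ∈ univ.erase i, w j = (∏ k, w k) * (w i)⁻¹ := by
          rw [eq_mul_inv_iff_mul_eq₀ (hwne i)]
          exact Finset.prod_erase_mul univ w (mem_univ i)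
        rw [h1, h2]
        ring
      calc ∑ i, Q i * ∏ j ∈ univ.erase i, Ψ j
          = ∑ i, (c ^ (m + 2) * ∏ k, w k) * (Q i * (w i)⁻¹) :=
            Finset.sum_congr rfl fun i _ => hterm i
        _ = (c ^ (m + 2) * ∏ k, w k) * ∑ i, Q i * (w i)⁻¹ := by rw [← Finset.mul_sum]
        _ = (c ^ (m + 2) * ∏ k, w k) * c := by rw [hlag']
        _ = ∏ i, Ψ i := by rw [hprodΨ]; ring
    · obtain ⟨i, j, hij, hne⟩ := Function.not_injective_iff.mp hinj
      have hΨi : Ψ i = 0 := by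
        rw [hΨ i]
        rw [Finset.prod_eq_zero (Finset.mem_erase.mpr ⟨Ne.symm hne, mem_univ j⟩)
          (by rw [hij, sub_self])]
        ring
      have hΨj : Ψ j = 0 := by
        rw [hΨ j]
        rw [Finset.prod_eq_zero (Finset.mem_erase.mpr ⟨hne, mem_univ i⟩)
          (by rw [hij, sub_self])]
        ring
      rw [Finset.prod_eq_zero (mem_univ i) hΨi]
      refine Finset.sum_eq_zero fun i' _ => ?_
      rcases eq_or_ne i' i with rfl | hii
      · rw [Finset.prod_eq_zero (Finset.mem_erase.mpr ⟨Ne.symm hne, mem_univ j⟩) hΨj]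
        ring
      · rw [Finset.prod_eq_zero (Finset.mem_erase.mpr ⟨hii.symm, mem_univ i⟩) hΨi]
        ring
  have hT : ∏ i, Q i ≠ 0 := Finset.prod_ne_zero_iff.mpr fun i _ => hQ i
  have main : ∑ i, ∏ j ∈ univ.erase i, (1 - lam j) = ∏ i, (1 - lam i) := by
    have hterm2 : ∀ i : Fin (m + 3), ∏ j ∈ univ.erase i, (Ψ j / Q j)
        = (Q i * ∏ j ∈ univ.erase i, Ψ j) / ∏ k, Q k := by
      intro i
      have hQe : ∏ j ∈ univ.erase i, Q j ≠ 0 :=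
        Finset.prod_ne_zero_iff.mpr fun j _ => hQ j
      rw [Finset.prod_div_distrib, eq_div_iff hT,
        ← Finset.prod_erase_mul univ Q (mem_univ i)]
      field_simp
    calc ∑ i, ∏ j ∈ univ.erase i, (1 - lam j)
        = ∑ i, ∏ j ∈ univ.erase i, (Ψ j / Q j) :=
          Finset.sum_congr rfl fun i _ => Finset.prod_congr rfl fun j _ => hkeypt j
      _ = ∑ i, (Q i * ∏ j ∈ univ.erase i, Ψ j) / ∏ k, Q k :=
          Finset.sum_congr rfl fun i _ => hterm2 i
      _ = (∑ i, Q i * ∏ j ∈ univ.erase i, Ψ j) / ∏ k, Q k := by rw [Finset.sum_div]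
      _ = (∏ i, Ψ i) / ∏ i, Q i := by rw [key2]
      _ = ∏ i, (Ψ i / Q i) := by rw [Finset.prod_div_distrib]
      _ = ∏ i, (1 - lam i) := Finset.prod_congr rfl fun i _ => (hkeypt i).symm
  have hMeq : M = Multiset.map
      (fun r : ℂ => ((m + 2 : ℕ) : ℂ) * r ^ (m + 1) / (c * r ^ (m + 2) + d) ^ 2) Φ.roots := rfl
  have hMcard : Multiset.card M = (m + 2) + 1 := by
    rw [hMeq, Multiset.card_map, hcard]
  rw [esymm_aux M hMcard, sub_eq_zero]
  have hPfin : (M.map fun r => X - C r).prod = ∏ i, (X - C (lam i)) := by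
    rw [hMeq, Multiset.map_map, hR, Multiset.map_coe, List.map_ofFn, Multiset.prod_coe,
      List.prod_ofFn]
    rfl
  rw [hPfin, derivative_finset_prod]
  simp only [derivative_sub, derivative_X, derivative_C, sub_zero, mul_one,
    eval_finset_sum, eval_prod, eval_sub, eval_X, eval_C]
  exact main
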